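/- arXiv:2007.07461 — 3 statements merged into one kernel-verified Lean document; each statement's English description precedes it below -/
import Mathlib

section
/- Let P be a row-stochastic matrix over a finite set and γ ∈ [0,1). Then for every entrywise-nonnegative vector v, ‖(I - γP)⁻¹ v‖_∞ ≤ 2 ‖(I - γ²P)⁻¹ v‖_∞. -/
open Matrix

lemma stoch_contract {S : Type*} [Fintype S]
    (P : Matrix S S ℝ) (hP0 : ∀ i j, 0 ≤ P i j) (hP1 : ∀ i, ∑ j, P i j = 1)
    (x : S → ℝ) : ‖P *ᵥ x‖ ≤ ‖x‖ := by
  rw [pi_norm_le_iff_of_nonneg (norm_nonneg x)]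
  intro i
  calc ‖(P *ᵥ x) i‖ = |∑ j, P i j * x j| := rfl
    _ ≤ ∑ j, |P i j * x j| := Finset.abs_sum_le_sum_abs _ _
    _ ≤ ∑ j, P i j * ‖x‖ := by
        apply Finset.sum_le_sum
        intro j _
        rw [abs_mul, abs_of_nonneg (hP0 i j)]
        exact mul_le_mul_of_nonneg_left (norm_le_pi_norm x j) (hP0 i j)
    _ = ‖x‖ := by rw [← Finset.sum_mul, hP1 i, one_mul]

lemma unit_det {S : Type*} [Fintype S] [DecidableEq S]
    (P : Matrix S S ℝ) (hP0 : ∀ i j, 0 ≤ P i j) (hP1 : ∀ i, ∑ j, P i j = 1)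
    (c : ℝ) (hc0 : 0 ≤ c) (hc1 : c < 1) : IsUnit (1 - c • P).det := by
  rw [← Matrix.isUnit_iff_isUnit_det, ← Matrix.mulVec_injective_iff_isUnit]
  intro y z h
  set d := y - z with hd
  have hd0 : (1 - c • P) *ᵥ d = 0 := by
    rw [hd, Matrix.mulVec_sub]
    change (1 - c • P) *ᵥ y - (1 - c • P) *ᵥ z = 0
    rw [h, sub_self]
  have hy' : d = c • (P *ᵥ d) := by
    rw [Matrix.sub_mulVec, Matrix.one_mulVec, Matrix.smul_mulVec, sub_eq_zero] at hd0
    exact hd0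
  have h1 : ‖d‖ ≤ c * ‖d‖ := by
    calc ‖d‖ = ‖c • (P *ᵥ d)‖ := by rw [← hy']
      _ = |c| * ‖P *ᵥ d‖ := by rw [norm_smul, Real.norm_eq_abs]
      _ ≤ c * ‖d‖ := by
          rw [abs_of_nonneg hc0]
          exact mul_le_mul_of_nonneg_left (stoch_contract P hP0 hP1 d) hc0
  have hdz : ‖d‖ = 0 := by nlinarith [norm_nonneg d]
  have : d = 0 := norm_eq_zero.mp hdz
  exact sub_eq_zero.mp this

lemma inv_bound {S : Type*} [Fintype S] [DecidableEq S]
    (P : Matrix S S ℝ) (hP0 : ∀ i j, 0 ≤ P i j) (hP1 : ∀ i, ∑ j, P i j = 1)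
    (c : ℝ) (hc0 : 0 ≤ c) (hc1 : c < 1) (x : S → ℝ) :
    (1 - c) * ‖(1 - c • P)⁻¹ *ᵥ x‖ ≤ ‖x‖ := by
  set y := (1 - c • P)⁻¹ *ᵥ x with hydef
  have hAy : (1 - c • P) *ᵥ y = x := by
    rw [hydef, Matrix.mulVec_mulVec, Matrix.mul_nonsing_inv _ (unit_det P hP0 hP1 c hc0 hc1),
      Matrix.one_mulVec]
  have hx : x = y - c • (P *ᵥ y) := by
    rw [← hAy, Matrix.sub_mulVec, Matrix.one_mulVec, Matrix.smul_mulVec]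
  have : ‖y‖ - c * ‖y‖ ≤ ‖x‖ := by
    have h2 : ‖y‖ - ‖c • (P *ᵥ y)‖ ≤ ‖x‖ := by
      rw [hx]; exact norm_sub_norm_le _ _
    have h3 : ‖c • (P *ᵥ y)‖ ≤ c * ‖y‖ := by
      rw [norm_smul, Real.norm_eq_abs, abs_of_nonneg hc0]
      exact mul_le_mul_of_nonneg_left (stoch_contract P hP0 hP1 y) hc0
    linarith
  linarith [this]

/-- For row-stochastic `P`, `γ ∈ [0,1)`, and entrywise-nonnegative `v`:
`‖(I - γP)⁻¹ v‖_∞ ≤ 2 ‖(I - γ²P)⁻¹ v‖_∞`. -/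
theorem stmt2 {S : Type*} [Fintype S] [DecidableEq S]
    (P : Matrix S S ℝ) (hP0 : ∀ i j, 0 ≤ P i j) (hP1 : ∀ i, ∑ j, P i j = 1)
    (γ : ℝ) (hγ0 : 0 ≤ γ) (hγ1 : γ < 1)
    (v : S → ℝ) (hv : ∀ i, 0 ≤ v i) :
    ‖(1 - γ • P)⁻¹ *ᵥ v‖ ≤ 2 * ‖(1 - γ ^ 2 • P)⁻¹ *ᵥ v‖ := by
  have hγ2_0 : (0:ℝ) ≤ γ ^ 2 := sq_nonneg γ
  have hγ2_1 : γ ^ 2 < 1 := by nlinarith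
  set A := 1 - γ • P with hA
  set B := 1 - γ ^ 2 • P with hB
  set w := A⁻¹ *ᵥ v with hw
  set u := B⁻¹ *ᵥ v with hu
  have hAu : IsUnit A.det := unit_det P hP0 hP1 γ hγ0 hγ1
  have hBu : IsUnit B.det := unit_det P hP0 hP1 (γ^2) hγ2_0 hγ2_1
  have hAw : A *ᵥ w = v := by
    rw [hw, Matrix.mulVec_mulVec, Matrix.mul_nonsing_inv _ hAu, Matrix.one_mulVec]
  -- B *ᵥ w = v + (γ - γ^2) • (P *ᵥ w)  since B = A + (γ - γ^2) • P... note B = 1 - γ²P = A + (γ-γ²)•P? A + (γ-γ²)P = 1 - γP + γP - γ²P ✓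
  have hBw : B *ᵥ w = v + (γ - γ ^ 2) • (P *ᵥ w) := by
    have hmat : B = A + (γ - γ ^ 2) • P := by
      rw [hA, hB]
      module
    rw [hmat, Matrix.add_mulVec, hAw, Matrix.smul_mulVec]
  have hweq : w = u + (γ - γ ^ 2) • (B⁻¹ *ᵥ (P *ᵥ w)) := by
    have : B⁻¹ *ᵥ (B *ᵥ w) = w := by
      rw [Matrix.mulVec_mulVec, Matrix.nonsing_inv_mul _ hBu, Matrix.one_mulVec]
    conv_lhs => rw [← this, hBw]
    rw [Matrix.mulVec_add, hu, Matrix.mulVec_smul]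
  have hkey : (1 - γ ^ 2) * ‖B⁻¹ *ᵥ (P *ᵥ w)‖ ≤ ‖P *ᵥ w‖ :=
    inv_bound P hP0 hP1 (γ^2) hγ2_0 hγ2_1 _
  have hPw : ‖P *ᵥ w‖ ≤ ‖w‖ := stoch_contract P hP0 hP1 w
  have hnorm : ‖w‖ ≤ ‖u‖ + (γ - γ ^ 2) * ‖B⁻¹ *ᵥ (P *ᵥ w)‖ := by
    calc ‖w‖ = ‖u + (γ - γ ^ 2) • (B⁻¹ *ᵥ (P *ᵥ w))‖ := by rw [← hweq]
      _ ≤ ‖u‖ + ‖(γ - γ ^ 2) • (B⁻¹ *ᵥ (P *ᵥ w))‖ := norm_add_le _ _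
      _ = ‖u‖ + |γ - γ ^ 2| * ‖B⁻¹ *ᵥ (P *ᵥ w)‖ := by rw [norm_smul, Real.norm_eq_abs]
      _ = ‖u‖ + (γ - γ ^ 2) * ‖B⁻¹ *ᵥ (P *ᵥ w)‖ := by
          rw [abs_of_nonneg (by nlinarith)]
  -- (1-γ²) ‖w‖ ≤ (1-γ²)‖u‖ + (γ-γ²)‖Pw‖ ≤ (1-γ²)‖u‖ + (γ-γ²)‖w‖
  have hBnn : 0 ≤ ‖B⁻¹ *ᵥ (P *ᵥ w)‖ := norm_nonneg _
  nlinarith [norm_nonneg w, norm_nonneg u]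
end

section
/- Let P be a row-stochastic matrix over a finite set, γ ∈ [0,1), and v an entrywise-nonnegative vector, where √v denotes the entrywise square root. Then ‖(I - γP)⁻¹ √v‖_∞ ≤ √( ‖(I - γP)⁻¹ v‖_∞ / (1 - γ) ). -/
open Matrix

attribute [local instance] Matrix.linftyOpNormedRing Matrix.linftyOpNormedAlgebra

section aux

variable {S : Type*} [Fintype S] [DecidableEq S]

lemma pow_stoch (P : Matrix S S ℝ) (hP0 : ∀ i j, 0 ≤ P i j) (hP1 : ∀ i, ∑ j, P i j = 1)
    (n : ℕ) : (∀ i j, 0 ≤ (P ^ n) i j) ∧ (∀ i, ∑ j, (P ^ n) i j = 1) := by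
  induction n with
  | zero =>
    constructor
    · intro i j
      by_cases h : i = j <;> simp [pow_zero, Matrix.one_apply, h]
    · intro i; simp [pow_zero, Matrix.one_apply]
  | succ n ih =>
    rw [pow_succ]
    constructor
    · intro i j
      rw [Matrix.mul_apply]
      exact Finset.sum_nonneg fun k _ => mul_nonneg (ih.1 i k) (hP0 k j)
    · intro i
      simp_rw [Matrix.mul_apply]
      rw [Finset.sum_comm]
      simp_rw [← Finset.mul_sum, hP1]
      simpa using ih.2 i

end aux

/-- For row-stochastic `P`, `γ ∈ [0,1)`, and entrywise-nonnegative `v`: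
`‖(I - γP)⁻¹ √v‖_∞ ≤ √( ‖(I - γP)⁻¹ v‖_∞ / (1 - γ) )`, where `√v` is the
entrywise square root. -/
theorem stmt3 {S : Type*} [Fintype S] [DecidableEq S]
    (P : Matrix S S ℝ) (hP0 : ∀ i j, 0 ≤ P i j) (hP1 : ∀ i, ∑ j, P i j = 1)
    (γ : ℝ) (hγ0 : 0 ≤ γ) (hγ1 : γ < 1)
    (v : S → ℝ) (hv : ∀ i, 0 ≤ v i) :
    ‖(1 - γ • P)⁻¹ *ᵥ (fun i => Real.sqrt (v i))‖
      ≤ Real.sqrt (‖(1 - γ • P)⁻¹ *ᵥ v‖ / (1 - γ)) := by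
  rcases isEmpty_or_nonempty S with hS | hS
  · have h1 : ‖(1 - γ • P)⁻¹ *ᵥ (fun i => Real.sqrt (v i))‖ = 0 := by
      simp [Pi.norm_def]
    rw [h1]
    exact Real.sqrt_nonneg _
  set A : Matrix S S ℝ := γ • P with hA
  -- norm of A is at most γ
  have hnA : ‖A‖ < 1 := by
    rw [Matrix.linfty_opNorm_def]
    have hrow : ∀ i : S, (∑ j, ‖A i j‖₊) = γ.toNNReal := by
      intro i
      apply NNReal.coe_injective
      push_cast
      have : ∀ j, ‖A i j‖ = γ * P i j := by
        intro j
        rw [hA, Matrix.smul_apply, smul_eq_mul, Real.norm_eq_abs,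
          abs_of_nonneg (mul_nonneg hγ0 (hP0 i j))]
      simp_rw [this, ← Finset.mul_sum, hP1 i, mul_one]
      rw [Real.coe_toNNReal _ hγ0]
    have hsup : (Finset.univ.sup fun i : S => ∑ j, ‖A i j‖₊) = γ.toNNReal := by
      rw [show (fun i : S => ∑ j, ‖A i j‖₊) = fun _ => γ.toNNReal from funext hrow]
      exact Finset.sup_const Finset.univ_nonempty _
    rw [hsup]
    simpa [Real.coe_toNNReal _ hγ0] using hγ1
  set M : Matrix S S ℝ := (1 - A)⁻¹ with hM
  have hsum : HasSum (fun n : ℕ => A ^ n) M := by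
    rw [hM, Matrix.nonsing_inv_eq_ringInverse]
    exact hasSum_geom_series_inverse A hnA
  -- entrywise sum
  have hentry : ∀ i j, HasSum (fun n : ℕ => (A ^ n) i j) (M i j) := by
    intro i j
    let e : Matrix S S ℝ →ₗ[ℝ] ℝ :=
      { toFun := fun B => B i j
        map_add' := fun B C => rfl
        map_smul' := fun c B => rfl }
    exact hsum.mapL (LinearMap.toContinuousLinearMap e)
  have hAn : ∀ (n : ℕ) (i j : S), (A ^ n) i j = γ ^ n * (P ^ n) i j := by
    intro n i j
    rw [hA, smul_pow, Matrix.smul_apply, smul_eq_mul]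
  -- entries of M are nonneg
  have hM0 : ∀ i j, 0 ≤ M i j := by
    intro i j
    refine hasSum_le (f := fun _ : ℕ => (0 : ℝ)) ?_ hasSum_zero (hentry i j)
    intro n
    rw [hAn]
    exact mul_nonneg (pow_nonneg hγ0 n) ((pow_stoch P hP0 hP1 n).1 i j)
  -- row sums of M
  have hMrow : ∀ i, ∑ j, M i j = (1 - γ)⁻¹ := by
    intro i
    have h1 : HasSum (fun n : ℕ => ∑ j, (A ^ n) i j) (∑ j, M i j) :=
      hasSum_sum fun j _ => hentry i j
    have h2 : (fun n : ℕ => ∑ j, (A ^ n) i j) = fun n : ℕ => γ ^ n := by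
      funext n
      simp_rw [hAn n i, ← Finset.mul_sum, (pow_stoch P hP0 hP1 n).2 i, mul_one]
    rw [h2] at h1
    exact h1.unique (hasSum_geometric_of_lt_one hγ0 hγ1)
  have h1γ : 0 < 1 - γ := by linarith
  set K : ℝ := ‖M *ᵥ v‖ with hK
  have hK0 : 0 ≤ K := norm_nonneg _
  have hrhs : 0 ≤ Real.sqrt (K / (1 - γ)) := Real.sqrt_nonneg _
  rw [pi_norm_le_iff_of_nonneg hrhs]
  intro i
  have hco : (M *ᵥ fun i => Real.sqrt (v i)) i = ∑ j, M i j * Real.sqrt (v j) := by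
    rw [Matrix.mulVec, dotProduct]
  have hnn : 0 ≤ ∑ j, M i j * Real.sqrt (v j) :=
    Finset.sum_nonneg fun j _ => mul_nonneg (hM0 i j) (Real.sqrt_nonneg _)
  rw [Real.norm_eq_abs, hco, abs_of_nonneg hnn]
  -- Cauchy-Schwarz
  have hCS : (∑ j, M i j * Real.sqrt (v j)) ^ 2
      ≤ (∑ j, M i j) * ∑ j, M i j * v j := by
    refine Finset.sum_sq_le_sum_mul_sum_of_sq_eq_mul Finset.univ
      (fun j _ => hM0 i j) (fun j _ => mul_nonneg (hM0 i j) (hv j)) ?_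
    intro j _
    rw [mul_pow, Real.sq_sqrt (hv j)]
    ring
  have hMv : ∑ j, M i j * v j ≤ K := by
    have : (M *ᵥ v) i = ∑ j, M i j * v j := by rw [Matrix.mulVec, dotProduct]
    calc ∑ j, M i j * v j = (M *ᵥ v) i := this.symm
      _ ≤ ‖(M *ᵥ v) i‖ := le_abs_self _
      _ ≤ K := norm_le_pi_norm (M *ᵥ v) i
  rw [Real.le_sqrt hnn (div_nonneg hK0 h1γ.le)]
  calc (∑ j, M i j * Real.sqrt (v j)) ^ 2
      ≤ (∑ j, M i j) * ∑ j, M i j * v j := hCS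
    _ = (1 - γ)⁻¹ * ∑ j, M i j * v j := by rw [hMrow i]
    _ ≤ (1 - γ)⁻¹ * K := by
        apply mul_le_mul_of_nonneg_left hMv (le_of_lt (inv_pos.mpr h1γ))
    _ = K / (1 - γ) := by rw [div_eq_inv_mul]
end

section
/- Let M ∈ ℝ^{A×B}, V(u,ϑ) = uᵀMϑ, and suppose the game has a unique pure Nash equilibrium (a*, b*) in the sense that (𝟙_{a*}, 𝟙_{b*}) is a Nash equilibrium of the mixed extension. Let (u, ϑ) be an ε-Nash equilibrium, let gap_A := min_{ϑ'∈Δ(B)} V(𝟙_{a*}, ϑ') − max over mixed u' with u'(a*)=0 of min_{ϑ'} V(u', ϑ') and suppose m_{a b*} ≤ m_{a* b*} − Δ for all a ≠ a* with Δ > 0. Then, using that (u, 𝟙_{b*}) is a 2ε-Nash equilibrium (by interchangeability), the probability u(a*) assigned by u to a* satisfies u(a*) ≥ 1 − 2ε/Δ. -/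
open Finset

/-- The point-mass (pure) mixed strategy at `a`. -/
noncomputable def purePt {A : Type*} [DecidableEq A] (a : A) : A → ℝ :=
  fun a' => if a' = a then 1 else 0

lemma purePt_mem {A : Type*} [Fintype A] [DecidableEq A] (a : A) :
    purePt a ∈ stdSimplex ℝ A := by
  constructor
  · intro i; unfold purePt; split <;> norm_num
  · simp [purePt]

/-- If `(𝟙_{a*}, 𝟙_{b*})` is a pure Nash equilibrium, every action `a ≠ a*`
pays at most `M a* b* − Δ` against `b*`, and `(u, ϑ)` is an `ε`-Nash
equilibrium, then `u(a*) ≥ 1 − 2ε/Δ`. -/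
theorem stmt17 {A B : Type*} [Fintype A] [Fintype B]
    [DecidableEq A] [DecidableEq B]
    (M : A → B → ℝ) (astar : A) (bstar : B) (ε Δ : ℝ) (hε : 0 ≤ ε) (hΔ : 0 < Δ)
    (u : A → ℝ) (ϑ : B → ℝ) (hu : u ∈ stdSimplex ℝ A) (hϑ : ϑ ∈ stdSimplex ℝ B)
    (hpureNE : ∀ u' ∈ stdSimplex ℝ A, ∀ ϑ' ∈ stdSimplex ℝ B,
      (∑ i, ∑ j, u' i * M i j * purePt bstar j)
          ≤ (∑ i, ∑ j, purePt astar i * M i j * purePt bstar j) ∧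
      (∑ i, ∑ j, purePt astar i * M i j * purePt bstar j)
          ≤ (∑ i, ∑ j, purePt astar i * M i j * ϑ' j))
    (hgap : ∀ a, a ≠ astar → M a bstar ≤ M astar bstar - Δ)
    (hεNE : ∀ u' ∈ stdSimplex ℝ A, ∀ ϑ' ∈ stdSimplex ℝ B,
      (∑ i, ∑ j, u' i * M i j * ϑ j) - ε ≤ (∑ i, ∑ j, u i * M i j * ϑ j) ∧
      (∑ i, ∑ j, u i * M i j * ϑ j) ≤ (∑ i, ∑ j, u i * M i j * ϑ' j) + ε) :
    1 - 2 * ε / Δ ≤ u astar := by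
  obtain ⟨hupos, husum⟩ := hu
  -- Value against bstar
  have hpureS : (∑ i, ∑ j, purePt astar i * M i j * purePt bstar j) = M astar bstar := by
    simp [purePt, Finset.sum_ite_eq']
  have hS : (∑ i, ∑ j, u i * M i j * purePt bstar j) = ∑ i, u i * M i bstar := by
    simp [purePt, Finset.sum_ite_eq']
  have hSa : (∑ i, ∑ j, purePt astar i * M i j * ϑ j) = ∑ j, M astar j * ϑ j := by
    simp [purePt, Finset.sum_ite_eq']
  -- step 1: V(𝟙a*, ϑ) ≥ m  (from pure NE second part)
  have h1 : M astar bstar ≤ ∑ j, M astar j * ϑ j := by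
    have := (hpureNE (purePt astar) (purePt_mem astar) ϑ hϑ).2
    rwa [hpureS, hSa] at this
  -- step 2: from ε-NE
  have h2 := (hεNE (purePt astar) (purePt_mem astar) (purePt bstar) (purePt_mem bstar)).1
  have h3 := (hεNE (purePt astar) (purePt_mem astar) (purePt bstar) (purePt_mem bstar)).2
  rw [hSa] at h2
  rw [hS] at h3
  have hlow : M astar bstar - 2 * ε ≤ ∑ i, u i * M i bstar := by linarith
  -- upper bound on ∑ u i * M i bstar
  have hupper : ∑ i, u i * M i bstar ≤ M astar bstar - (1 - u astar) * Δ := by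
    have key : ∑ i, u i * M i bstar ≤
        ∑ i, u i * (if i = astar then M astar bstar else M astar bstar - Δ) := by
      apply Finset.sum_le_sum
      intro i _
      by_cases h : i = astar
      · simp [h]
      · simp only [h, if_neg]
        exact mul_le_mul_of_nonneg_left (hgap i h) (hupos i)
    have expand : ∑ i, u i * (if i = astar then M astar bstar else M astar bstar - Δ)
        = ∑ i, (u i * (M astar bstar - Δ) + (if i = astar then u i * Δ else 0)) := by
      apply Finset.sum_congr rfl
      intro i _
      by_cases h : i = astar <;> simp [h] <;> ring
    rw [expand, Finset.sum_add_distrib, ← Finset.sum_mul, husum,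
      Finset.sum_ite_eq' Finset.univ astar (fun i => u i * Δ)] at key
    simp at key
    linarith
  have hkey : (1 - u astar) * Δ ≤ 2 * ε := by linarith
  have : 1 - u astar ≤ 2 * ε / Δ := by rw [le_div_iff₀ hΔ]; linarith
  linarith
end
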